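/- Suppose Q is a probability measure on G_T such that (e^{-rt}S(t))_{t∈[0,T]} is an (F_t)_{t∈[0,T]}-martingale under Q, and such that for each s ∈ [0,T] there exists an F_s-measurable random variable G(s) which is a version of Q(s < τ | F_T), i.e. E_Q[1_A·G(s)] = Q(A ∩ {s < τ}) for every A ∈ F_T. Then the discounted stock price process (e^{-rt}S(t))_{t∈[0,T]} is a (G_t)_{t∈[0,T]}-martingale under Q; in fact e^{-rt}S(t) = E_Q[e^{-rT}S(T) | G_t] Q-a.s. for every t ∈ [0,T]. -/

import Mathlib

open MeasureTheory ProbabilityTheory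

/-- The natural filtration of a real-valued process `W`. -/
def natFilt {Ω : Type*} (W : ℝ → Ω → ℝ) (t : ℝ) : MeasurableSpace Ω :=
  ⨆ u ∈ Set.Icc (0 : ℝ) t, MeasurableSpace.comap (W u) inferInstance

/-- The σ-algebra generated by the `P`-null sets. -/
def sigmaNull {Ω : Type*} [MeasurableSpace Ω] (P : Measure Ω) : MeasurableSpace Ω :=
  MeasurableSpace.generateFrom {A | MeasurableSet A ∧ P A = 0}

/-- `W` is a standard Brownian motion under `P`. -/
def IsStdBM {Ω : Type*} [MeasurableSpace Ω] (P : Measure Ω) (W : ℝ → Ω → ℝ) : Prop :=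
  (∀ t : ℝ, Measurable (W t)) ∧
  (∀ ω, W 0 ω = 0) ∧
  (∀ ω, Continuous fun t => W t ω) ∧
  (∀ s t : ℝ, 0 ≤ s → s ≤ t →
    Measure.map (fun ω => W t ω - W s ω) P = gaussianReal 0 (t - s).toNNReal) ∧
  (∀ s t : ℝ, 0 ≤ s → s ≤ t →
    Indep (MeasurableSpace.comap (fun ω => W t ω - W s ω) inferInstance) (natFilt W s) P)

/-- `X` is an `(F_t)_{t∈[0,T]}`-martingale under `Q`. -/
def MartingaleOn {Ω : Type*} [mΩ : MeasurableSpace Ω] (F : ℝ → MeasurableSpace Ω)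
    (Q : Measure Ω) (X : ℝ → Ω → ℝ) (T : ℝ) : Prop :=
  (∀ t ∈ Set.Icc (0 : ℝ) T, Measurable[F t] (X t) ∧ Integrable (X t) Q) ∧
  ∀ s t : ℝ, 0 ≤ s → s ≤ t → t ≤ T → Q[X t | F s] =ᵐ[Q] X s

/-- If an integrable function is `≤ -ε` on a measurable set `A` but its integral over `A`
is nonnegative, then `A` is null. -/
lemma null_of_setIntegral_nonneg {Ω : Type*} {m0 : MeasurableSpace Ω} {Q : Measure Ω}
    [IsFiniteMeasure Q] {f : Ω → ℝ} {A : Set Ω} (hA : MeasurableSet A)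
    (hfA : IntegrableOn f A Q) {ε : ℝ} (hε : 0 < ε) (hb : ∀ x ∈ A, f x ≤ -ε)
    (hi : 0 ≤ ∫ x in A, f x ∂Q) : Q A = 0 := by
  have h2 : ε * (Q A).toReal ≤ ∫ x in A, -f x ∂Q :=
    setIntegral_ge_of_const_le_real (c := ε) (f := fun x => -f x) hA (measure_ne_top Q A)
      (fun x hx => by linarith [hb x hx]) hfA.neg
  rw [integral_neg] at h2
  have h3 : (Q A).toReal ≤ 0 := by nlinarith
  have h4 : (Q A).toReal = 0 := le_antisymm h3 ENNReal.toReal_nonneg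
  rcases (ENNReal.toReal_eq_zero_iff _).mp h4 with h | h
  · exact h
  · exact absurd h (measure_ne_top Q A)

/-- A sub-σ-algebra-measurable function whose set integrals over sub-measurable sets
lie between `0` and the measure of the set is a.e. in `[0,1]`. -/
lemma ae_mem_Icc_of_setIntegral {Ω : Type*} {m m0 : MeasurableSpace Ω} (hm : m ≤ m0)
    (Q : Measure Ω) [IsFiniteMeasure Q] {f : Ω → ℝ} (hf : Measurable[m] f)
    (h1 : ∀ A : Set Ω, MeasurableSet[m] A → 0 ≤ ∫ ω in A, f ω ∂Q)
    (h2 : ∀ A : Set Ω, MeasurableSet[m] A → ∫ ω in A, f ω ∂Q ≤ (Q A).toReal) :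
    ∀ᵐ ω ∂Q, 0 ≤ f ω ∧ f ω ≤ 1 := by
  have hf0 : Measurable[m0] f := hf.mono hm le_rfl
  -- upper bound
  have hupper : Q {ω | 1 < f ω} = 0 := by
    set A : ℕ → Set Ω := fun n => {ω | 1 + ((n : ℝ) + 1)⁻¹ ≤ f ω ∧ f ω ≤ (n : ℝ) + 1}
    have hAm : ∀ n, MeasurableSet[m] (A n) := fun n =>
      ((measurableSet_le measurable_const hf)).inter (measurableSet_le hf measurable_const)
    have hAnull : ∀ n, Q (A n) = 0 := by
      intro n
      have hAm0 : MeasurableSet[m0] (A n) := hm _ (hAm n)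
      have hint : IntegrableOn f (A n) Q := by
        refine Measure.integrableOn_of_bounded (measure_ne_top Q _)
          hf0.aestronglyMeasurable (M := (n : ℝ) + 1) ?_
        refine (ae_restrict_iff' hAm0).mpr (ae_of_all _ fun x hx => ?_)
        have h1x := hx.1; have h2x := hx.2
        rw [Real.norm_eq_abs, abs_le]
        constructor <;> nlinarith [inv_nonneg.mpr (by positivity : (0:ℝ) ≤ (n:ℝ)+1)]
      have hg : ∀ x ∈ A n, (1 : ℝ) - f x ≤ -((n : ℝ) + 1)⁻¹ := fun x hx => by
        have := hx.1; linarith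
      have hi : 0 ≤ ∫ x in A n, (1 - f x) ∂Q := by
        rw [integral_sub (integrableOn_const (C := (1:ℝ)) (measure_ne_top Q _)) hint]
        have := h2 (A n) (hAm n)
        simp only [integral_const, smul_eq_mul, mul_one, Measure.real, Measure.restrict_apply_univ]
        linarith
      exact null_of_setIntegral_nonneg hAm0
        ((integrableOn_const (measure_ne_top Q _)).sub hint)
        (by positivity : (0:ℝ) < ((n:ℝ)+1)⁻¹) hg hi
    refine measure_mono_null (fun ω hω => ?_) (measure_iUnion_null hAnull)
    have h1ω : (1 : ℝ) < f ω := hω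
    obtain ⟨k, hk⟩ := exists_nat_gt (max (f ω) (f ω - 1)⁻¹)
    have hk1 : f ω < k := lt_of_le_of_lt (le_max_left _ _) hk
    have hk2 : (f ω - 1)⁻¹ < k := lt_of_le_of_lt (le_max_right _ _) hk
    refine Set.mem_iUnion.2 ⟨k, ?_, by linarith⟩
    have hpos : 0 < f ω - 1 := by linarith
    have : ((k : ℝ) + 1)⁻¹ ≤ f ω - 1 := by
      rw [inv_le_comm₀ (by positivity) hpos]
      calc (f ω - 1)⁻¹ ≤ (k : ℝ) := le_of_lt hk2
        _ ≤ (k : ℝ) + 1 := by linarith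
    simpa using by linarith
  -- lower bound
  have hlower : Q {ω | f ω < 0} = 0 := by
    set A : ℕ → Set Ω := fun n => {ω | f ω ≤ -((n : ℝ) + 1)⁻¹ ∧ -((n : ℝ) + 1) ≤ f ω}
    have hAm : ∀ n, MeasurableSet[m] (A n) := fun n =>
      ((measurableSet_le hf measurable_const)).inter (measurableSet_le measurable_const hf)
    have hAnull : ∀ n, Q (A n) = 0 := by
      intro n
      have hAm0 : MeasurableSet[m0] (A n) := hm _ (hAm n)
      have hint : IntegrableOn f (A n) Q := by
        refine Measure.integrableOn_of_bounded (measure_ne_top Q _)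
          hf0.aestronglyMeasurable (M := (n : ℝ) + 1) ?_
        refine (ae_restrict_iff' hAm0).mpr (ae_of_all _ fun x hx => ?_)
        rw [Real.norm_eq_abs, abs_le]
        refine ⟨hx.2, le_trans hx.1 ?_⟩
        have : (0:ℝ) ≤ ((n:ℝ)+1)⁻¹ := by positivity
        linarith
      exact null_of_setIntegral_nonneg hAm0 hint
        (by positivity : (0:ℝ) < ((n:ℝ)+1)⁻¹) (fun x hx => hx.1) (h1 (A n) (hAm n))
    refine measure_mono_null (fun ω hω => ?_) (measure_iUnion_null hAnull)
    have h1ω : f ω < 0 := hω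
    obtain ⟨k, hk⟩ := exists_nat_gt (max (-f ω) (-f ω)⁻¹)
    have hk1 : -f ω < k := lt_of_le_of_lt (le_max_left _ _) hk
    have hk2 : (-f ω)⁻¹ < k := lt_of_le_of_lt (le_max_right _ _) hk
    refine Set.mem_iUnion.2 ⟨k, ?_, by push_cast; linarith⟩
    have hpos : 0 < -f ω := by linarith
    have : ((k : ℝ) + 1)⁻¹ ≤ -f ω := by
      rw [inv_le_comm₀ (by positivity) hpos]
      calc (-f ω)⁻¹ ≤ (k : ℝ) := le_of_lt hk2
        _ ≤ (k : ℝ) + 1 := by linarith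
    simpa using by linarith
  have h5 : ∀ᵐ ω ∂Q, ¬(1 < f ω) := by rw [ae_iff]; simpa using hupper
  have h6 : ∀ᵐ ω ∂Q, ¬(f ω < 0) := by rw [ae_iff]; simpa using hlower
  filter_upwards [h5, h6] with ω hω1 hω2
  exact ⟨not_lt.mp hω2, not_lt.mp hω1⟩

/-- In the Black–Scholes setting with default time `τ` and enlarged
filtration `G_t = σ(F_t ∪ I_t)`, suppose `Q` is a probability measure on `G_T` such that
`(e^{-rt}S(t))_{t∈[0,T]}` is an `(F_t)`-martingale under `Q`, and such that for each
`s ∈ [0,T]` there exists an `F_s`-measurable random variable `G(s)` which is a version of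
`Q(s < τ | F_T)`. Then the discounted stock price process is a `(G_t)_{t∈[0,T]}`-martingale
under `Q`; in fact `e^{-rt}S(t) = E_Q[e^{-rT}S(T) | G_t]` `Q`-a.s. for every `t ∈ [0,T]`. -/

theorem stmt4 {Ω : Type*} [mΩ : MeasurableSpace Ω] (P : Measure Ω)
    [IsProbabilityMeasure P] (W : ℝ → Ω → ℝ) (hW : IsStdBM P W)
    (T r σ' μ' S0 : ℝ) (hT : 0 < T) (hr : 0 ≤ r) (hσ : 0 < σ') (hS0 : 0 < S0)
    (S : ℝ → Ω → ℝ)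
    (hS : ∀ t ω, S t ω = S0 * Real.exp (σ' * W t ω + (μ' - σ' ^ 2 / 2) * t))
    (F : ℝ → MeasurableSpace Ω) (hF : ∀ t : ℝ, F t = natFilt W t ⊔ sigmaNull P)
    (τ : Ω → ℝ) (hτ_pos : ∀ ω, 0 < τ ω) (hτ_meas : Measurable τ)
    (GG : ℝ → MeasurableSpace Ω)
    (hGG : ∀ t, GG t = F t ⊔ MeasurableSpace.generateFrom
      {A | ∃ u : ℝ, 0 ≤ u ∧ u ≤ t ∧ A = {ω | τ ω ≤ u}})
    (Q : @Measure Ω (GG T)) (hQ : @IsProbabilityMeasure Ω (GG T) Q)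
    (hSmart : MartingaleOn (mΩ := GG T) F Q
      (fun t ω => Real.exp (-(r * t)) * S t ω) T)
    (hG_version : ∀ s ∈ Set.Icc (0 : ℝ) T, ∃ Gs : Ω → ℝ, Measurable[F s] Gs ∧
      ∀ A : Set Ω, MeasurableSet[F T] A →
        ∫ ω in A, Gs ω ∂Q = (Q (A ∩ {ω | s < τ ω})).toReal) :
    ∀ t ∈ Set.Icc (0 : ℝ) T,
      (fun ω => Real.exp (-(r * t)) * S t ω) =ᵐ[Q]
        Q[fun ω => Real.exp (-(r * T)) * S T ω | GG t] := by
  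
  intro t ht
  obtain ⟨ht0, htT⟩ := ht
  haveI := hQ
  classical
  letI : MeasurableSpace Ω := GG T
  -- monotonicity of the filtrations
  have hle : ∀ {m1 m2 : MeasurableSpace Ω}, m1 ≤ m2 →
      ∀ {s : Set Ω}, MeasurableSet[m1] s → MeasurableSet[m2] s := fun h _ hs => h _ hs
  have hnat : ∀ a b : ℝ, a ≤ b → natFilt W a ≤ natFilt W b := by
    intro a b hab
    exact biSup_mono fun u hu => ⟨hu.1, hu.2.trans hab⟩
  have hFmono : ∀ a b : ℝ, a ≤ b → F a ≤ F b := by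
    intro a b hab; rw [hF a, hF b]; exact sup_le_sup_right (hnat a b hab) _
  have hFG : ∀ s : ℝ, F s ≤ GG s := fun s => by rw [hGG s]; exact le_sup_left
  have hFT_top : F T ≤ GG T := hFG T
  have hFt_top : F t ≤ GG T := (hFmono t T htT).trans hFT_top
  have hGt_top : GG t ≤ GG T := by
    rw [hGG t, hGG T]
    refine sup_le_sup (hFmono t T htT) (MeasurableSpace.generateFrom_mono ?_)
    rintro A ⟨u, hu0, hut, rfl⟩; exact ⟨u, hu0, hut.trans htT, rfl⟩
  haveI : IsFiniteMeasure (Q.trim hFT_top) := isFiniteMeasure_trim hFT_top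
  haveI : IsFiniteMeasure (Q.trim hFt_top) := isFiniteMeasure_trim hFt_top
  haveI : IsFiniteMeasure (Q.trim hGt_top) := isFiniteMeasure_trim hGt_top
  set X : Ω → ℝ := fun ω => Real.exp (-(r * T)) * S T ω with hXdef
  have hXT := hSmart.1 T ⟨le_of_lt hT, le_rfl⟩
  have hXmeas : Measurable[F T] X := hXT.1
  have hXint : Integrable X Q := hXT.2
  -- measurability of the default-time sets
  have hτle : ∀ u : ℝ, 0 ≤ u → u ≤ T → MeasurableSet[GG T] {ω | τ ω ≤ u} := by
    intro u h0 h1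
    refine hle (m1 := MeasurableSpace.generateFrom
      {A | ∃ u : ℝ, 0 ≤ u ∧ u ≤ T ∧ A = {ω | τ ω ≤ u}}) ?_
      (MeasurableSpace.measurableSet_generateFrom ⟨u, h0, h1, rfl⟩)
    rw [hGG T]; exact le_sup_right
  have hτgt : ∀ u : ℝ, 0 ≤ u → u ≤ T → MeasurableSet[GG T] {ω | u < τ ω} := by
    intro u h0 h1
    have : {ω | u < τ ω} = {ω | τ ω ≤ u}ᶜ := by ext ω; simp [not_le]
    rw [this]; exact (hτle u h0 h1).compl
  -- Lemma C : pulling a bounded F_t-measurable factor out of the martingale identity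
  have lemC : ∀ k : Ω → ℝ, StronglyMeasurable[F t] k → (∀ᵐ ω ∂Q, ‖k ω‖ ≤ 1) →
      ∫ ω, k ω * X ω ∂Q = ∫ ω, k ω * (Q[X | F t]) ω ∂Q := by
    intro k hk hkb
    have hkX : Integrable (k * X) Q := by
      refine Integrable.mono' hXint.norm
        (((hk.mono hFt_top).mul (hXmeas.stronglyMeasurable.mono hFT_top)).aestronglyMeasurable) ?_
      filter_upwards [hkb] with ω hω
      calc ‖k ω * X ω‖ = ‖k ω‖ * ‖X ω‖ := norm_mul _ _
        _ ≤ 1 * ‖X ω‖ := mul_le_mul_of_nonneg_right hω (norm_nonneg _)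
        _ = ‖X ω‖ := one_mul _
    have hmul := condExp_mul_of_stronglyMeasurable_left (μ := Q) (m := F t) hk hkX hXint
    calc ∫ ω, k ω * X ω ∂Q = ∫ ω, (k * X) ω ∂Q := rfl
      _ = ∫ ω, (Q[k * X | F t]) ω ∂Q := (integral_condExp hFt_top).symm
      _ = ∫ ω, (k * Q[X | F t]) ω ∂Q := integral_congr_ae hmul
      _ = ∫ ω, k ω * (Q[X | F t]) ω ∂Q := rfl
  -- the key identity on sets of the form B ∩ {u < τ}
  have key : ∀ u : ℝ, 0 ≤ u → u ≤ t → ∀ B : Set Ω, MeasurableSet[F t] B →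
      ∫ ω in B ∩ {ω | u < τ ω}, (Q[X | F t]) ω ∂Q = ∫ ω in B ∩ {ω | u < τ ω}, X ω ∂Q := by
    intro u hu0 hut B hB
    have huT : u ≤ T := hut.trans htT
    have hFu_t : F u ≤ F t := hFmono u t hut
    have hFu_T : F u ≤ F T := hFmono u T huT
    obtain ⟨Gu, hGumeas, hGu⟩ := hG_version u ⟨hu0, huT⟩
    have hGu0 : Measurable[GG T] Gu := (hGumeas.mono hFu_T le_rfl).mono hFT_top le_rfl
    -- Gu takes values in [0,1] a.e.
    have hGu_bdd : ∀ᵐ ω ∂Q, 0 ≤ Gu ω ∧ Gu ω ≤ 1 := by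
      refine ae_mem_Icc_of_setIntegral ((hFmono u T huT).trans hFT_top) Q hGumeas
        (fun A hA => ?_) (fun A hA => ?_)
      · rw [hGu A (hle hFu_T hA)]; exact ENNReal.toReal_nonneg
      · rw [hGu A (hle hFu_T hA)]
        exact ENNReal.toReal_mono (measure_ne_top Q A) (measure_mono Set.inter_subset_left)
    have hGuint : Integrable Gu Q := by
      refine Integrable.mono' (integrable_const 1) hGu0.aestronglyMeasurable ?_
      filter_upwards [hGu_bdd] with ω hω
      rw [Real.norm_eq_abs, abs_le]; constructor <;> linarith [hω.1, hω.2]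
    have hτgtu : MeasurableSet[GG T] {ω | u < τ ω} := hτgt u hu0 huT
    -- Lemma B : Gu acts as the conditional probability of {u < τ} against F_T functions
    have lemB : ∀ h : Ω → ℝ, StronglyMeasurable[F T] h → Integrable h Q →
        ∫ ω, h ω * Gu ω ∂Q = ∫ ω in {ω | u < τ ω}, h ω ∂Q := by
      intro h hh hhint
      set f : Ω → ℝ := Set.indicator {ω | u < τ ω} (fun _ => (1 : ℝ)) with hfdef
      have hf_int : Integrable f Q := (integrable_const (1 : ℝ)).indicator hτgtu
      have hf_bd : ∀ ω, ‖f ω‖ ≤ 1 := by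
        intro ω
        by_cases hω : ω ∈ {ω | u < τ ω} <;> simp [hfdef, hω]
      have hGu_ver : Gu =ᵐ[Q] Q[f | F T] := by
        refine ae_eq_condExp_of_forall_setIntegral_eq hFT_top hf_int
          (fun s hs _ => hGuint.integrableOn) (fun s hs _ => ?_)
          (((hGumeas.mono hFu_T le_rfl).stronglyMeasurable).aestronglyMeasurable)
        rw [hGu s hs, hfdef]
        rw [setIntegral_indicator hτgtu, setIntegral_const, smul_eq_mul, mul_one]; rfl
      have hhf : Integrable (h * f) Q := by
        refine Integrable.mono' hhint.norm
          (((hh.mono hFT_top).mul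
            (stronglyMeasurable_const.indicator hτgtu)).aestronglyMeasurable) ?_
        refine ae_of_all _ fun ω => ?_
        calc ‖h ω * f ω‖ = ‖h ω‖ * ‖f ω‖ := norm_mul _ _
          _ ≤ ‖h ω‖ * 1 := mul_le_mul_of_nonneg_left (hf_bd ω) (norm_nonneg _)
          _ = ‖h ω‖ := mul_one _
      have hmul := condExp_mul_of_stronglyMeasurable_left (μ := Q) (m := F T) hh hhf hf_int
      calc ∫ ω, h ω * Gu ω ∂Q
          = ∫ ω, (h * Q[f | F T]) ω ∂Q := by
            refine integral_congr_ae ?_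
            filter_upwards [hGu_ver] with ω hω
            simp only [Pi.mul_apply]; rw [hω]
        _ = ∫ ω, (Q[h * f | F T]) ω ∂Q := (integral_congr_ae hmul).symm
        _ = ∫ ω, (h * f) ω ∂Q := integral_condExp hFT_top
        _ = ∫ ω, Set.indicator {ω | u < τ ω} h ω ∂Q := by
            refine integral_congr_ae (ae_of_all _ fun ω => ?_)
            by_cases hω : ω ∈ {ω | u < τ ω} <;> simp [hfdef, hω]
        _ = ∫ ω in {ω | u < τ ω}, h ω ∂Q := integral_indicator hτgtu
    -- rewriting set integrals over B ∩ {u < τ}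
    have hB0 : MeasurableSet[GG T] B := hle hFt_top hB
    have hrw : ∀ h : Ω → ℝ, ∫ ω in B ∩ {ω | u < τ ω}, h ω ∂Q
        = ∫ ω in {ω | u < τ ω}, h ω * Set.indicator B (fun _ => (1:ℝ)) ω ∂Q := by
      intro h
      rw [Set.inter_comm, ← setIntegral_indicator hB0]
      refine integral_congr_ae (ae_of_all _ fun ω => ?_)
      by_cases hω : ω ∈ B <;> simp [hω]
    have hIndB : StronglyMeasurable[F t] (Set.indicator B (fun _ => (1:ℝ))) :=
      stronglyMeasurable_const.indicator hB
    have hIndB_bd : ∀ ω, ‖Set.indicator B (fun _ => (1:ℝ)) ω‖ ≤ 1 := by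
      intro ω; by_cases hω : ω ∈ B <;> simp [hω]
    -- apply Lemma B to X·1_B and to (Q[X|F t])·1_B
    have hstep : ∀ h : Ω → ℝ, StronglyMeasurable[F T] h → Integrable h Q →
        ∫ ω in B ∩ {ω | u < τ ω}, h ω ∂Q
          = ∫ ω, h ω * Set.indicator B (fun _ => (1:ℝ)) ω * Gu ω ∂Q := by
      intro h hh hhint
      have hh' : StronglyMeasurable[F T]
          (fun ω => h ω * Set.indicator B (fun _ => (1:ℝ)) ω) :=
        hh.mul (hIndB.mono (hFmono t T htT))
      have hh'int : Integrable (fun ω => h ω * Set.indicator B (fun _ => (1:ℝ)) ω) Q := by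
        refine Integrable.mono' hhint.norm ((hh'.mono hFT_top).aestronglyMeasurable)
          (ae_of_all _ fun ω => ?_)
        calc ‖h ω * Set.indicator B (fun _ => (1:ℝ)) ω‖
            = ‖h ω‖ * ‖Set.indicator B (fun _ => (1:ℝ)) ω‖ := norm_mul _ _
          _ ≤ ‖h ω‖ * 1 := mul_le_mul_of_nonneg_left (hIndB_bd ω) (norm_nonneg _)
          _ = ‖h ω‖ := mul_one _
      rw [hrw h, ← lemB _ hh' hh'int]
    have hgmeas : StronglyMeasurable[F T] (Q[X | F t]) :=
      stronglyMeasurable_condExp.mono (hFmono t T htT)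
    have hXT' : StronglyMeasurable[F T] X := hXmeas.stronglyMeasurable
    rw [hstep _ hXT' hXint, hstep _ hgmeas integrable_condExp]
    -- now use Lemma C with k = 1_B · Gu
    have hk : StronglyMeasurable[F t] (fun ω => Set.indicator B (fun _ => (1:ℝ)) ω * Gu ω) :=
      hIndB.mul ((hGumeas.mono hFu_t le_rfl).stronglyMeasurable)
    have hkb : ∀ᵐ ω ∂Q, ‖Set.indicator B (fun _ => (1:ℝ)) ω * Gu ω‖ ≤ 1 := by
      filter_upwards [hGu_bdd] with ω hω
      calc ‖Set.indicator B (fun _ => (1:ℝ)) ω * Gu ω‖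
          = ‖Set.indicator B (fun _ => (1:ℝ)) ω‖ * ‖Gu ω‖ := norm_mul _ _
        _ ≤ 1 * 1 := by
            refine mul_le_mul (hIndB_bd ω) ?_ (norm_nonneg _) zero_le_one
            rw [Real.norm_eq_abs, abs_le]; constructor <;> linarith [hω.1, hω.2]
        _ = 1 := one_mul 1
    have := lemC _ hk hkb
    calc ∫ ω, (Q[X | F t]) ω * Set.indicator B (fun _ => (1:ℝ)) ω * Gu ω ∂Q
        = ∫ ω, (Set.indicator B (fun _ => (1:ℝ)) ω * Gu ω) * (Q[X | F t]) ω ∂Q := by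
          refine integral_congr_ae (ae_of_all _ fun ω => ?_); ring
      _ = ∫ ω, (Set.indicator B (fun _ => (1:ℝ)) ω * Gu ω) * X ω ∂Q := this.symm
      _ = ∫ ω, X ω * Set.indicator B (fun _ => (1:ℝ)) ω * Gu ω ∂Q := by
          refine integral_congr_ae (ae_of_all _ fun ω => ?_); ring
  -- the generating π-system of GG t
  set D : Set (Set Ω) := {s : Set Ω | MeasurableSet[F t] s ∨
    ∃ B, MeasurableSet[F t] B ∧ ∃ u : ℝ, 0 ≤ u ∧ u ≤ t ∧ s = B ∩ {ω | τ ω ≤ u}} with hDdef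
  have h_eq : GG t = MeasurableSpace.generateFrom D := by
    rw [hGG t]
    apply le_antisymm
    · refine sup_le ?_ (MeasurableSpace.generateFrom_le fun s hs => ?_)
      · rw [MeasurableSpace.le_def]
        intro s hs
        exact MeasurableSpace.measurableSet_generateFrom (Or.inl hs)
      · obtain ⟨u, hu0, hut, rfl⟩ := hs
        exact MeasurableSpace.measurableSet_generateFrom
          (Or.inr ⟨Set.univ, MeasurableSet.univ, u, hu0, hut, (Set.univ_inter _).symm⟩)
    · refine MeasurableSpace.generateFrom_le fun s hs => ?_
      rcases hs with h | ⟨B, hB, u, h0, h1, rfl⟩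
      · exact hle le_sup_left h
      · refine (hle le_sup_left hB).inter (hle le_sup_right ?_)
        exact MeasurableSpace.measurableSet_generateFrom ⟨u, h0, h1, rfl⟩
  have h_inter : IsPiSystem D := by
    rintro s1 (h1 | ⟨B1, hB1, u1, hu10, hu1t, rfl⟩) s2 (h2 | ⟨B2, hB2, u2, hu20, hu2t, rfl⟩) hne
    · exact Or.inl (h1.inter h2)
    · refine Or.inr ⟨s1 ∩ B2, h1.inter hB2, u2, hu20, hu2t, ?_⟩
      rw [Set.inter_assoc]
    · refine Or.inr ⟨B1 ∩ s2, hB1.inter h2, u1, hu10, hu1t, ?_⟩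
      ext ω; simp only [Set.mem_inter_iff, Set.mem_setOf_eq]; tauto
    · refine Or.inr ⟨B1 ∩ B2, hB1.inter hB2, min u1 u2, le_min hu10 hu20,
        (min_le_left _ _).trans hu1t, ?_⟩
      ext ω
      simp only [Set.mem_inter_iff, Set.mem_setOf_eq, le_min_iff]
      tauto
  -- set-integral equality on all of GG t, by Dynkin's π-λ theorem
  have main : ∀ s : Set Ω, MeasurableSet[GG t] s →
      ∫ ω in s, (Q[X | F t]) ω ∂Q = ∫ ω in s, X ω ∂Q := by
    have hint_g : Integrable (Q[X | F t]) Q := integrable_condExp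
    refine MeasurableSpace.induction_on_inter (m := GG t)
      (C := fun s _ => ∫ ω in s, (Q[X | F t]) ω ∂Q = ∫ ω in s, X ω ∂Q)
      h_eq h_inter ?_ ?_ ?_ ?_
    · simp
    · rintro s (hs | ⟨B, hB, u, hu0, hut, rfl⟩)
      · exact setIntegral_condExp hFt_top hXint hs
      · have hτleu : MeasurableSet[GG T] {ω | τ ω ≤ u} := hτle u hu0 (hut.trans htT)
        have hdiff : B \ {ω | τ ω ≤ u} = B ∩ {ω | u < τ ω} := by
          ext ω; simp [Set.mem_diff, not_le]
        have hsplit : ∀ h : Ω → ℝ, Integrable h Q →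
            ∫ ω in B ∩ {ω | τ ω ≤ u}, h ω ∂Q
              = ∫ ω in B, h ω ∂Q - ∫ ω in B ∩ {ω | u < τ ω}, h ω ∂Q := by
          intro h hh
          have := integral_inter_add_diff (μ := Q) (s := B) (t := {ω | τ ω ≤ u})
            hτleu hh.integrableOn
          rw [hdiff] at this
          linarith
        rw [hsplit _ hint_g, hsplit _ hXint, key u hu0 hut B hB,
          setIntegral_condExp hFt_top hXint hB]
    · intro s hs hind
      have hs0 : MeasurableSet[GG T] s := hle hGt_top hs
      have h1 := integral_add_compl hs0 hint_g
      have h2 := integral_add_compl hs0 hXint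
      have h3 : ∫ ω, (Q[X | F t]) ω ∂Q = ∫ ω, X ω ∂Q := integral_condExp hFt_top
      linarith
    · intro f hdisj hmeas hind
      have hm0 : ∀ i, MeasurableSet[GG T] (f i) := fun i => hle hGt_top (hmeas i)
      rw [integral_iUnion hm0 hdisj hint_g.integrableOn,
        integral_iUnion hm0 hdisj hXint.integrableOn]
      exact tsum_congr hind
  have hfinal : Q[X | F t] =ᵐ[Q] Q[X | GG t] := by
    refine ae_eq_condExp_of_forall_setIntegral_eq hGt_top hXint
      (fun s _ _ => integrable_condExp.integrableOn) (fun s hs _ => main s hs)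
      ((stronglyMeasurable_condExp.mono (hFG t)).aestronglyMeasurable)
  exact (hSmart.2 t T ht0 htT le_rfl).symm.trans hfinal
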